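/- Fix 1 ≤ k ≤ r. There exist a constant c > 0 and n₀ such that for all n ≥ n₀ and every maximal intersecting family 𝒜 ⊆ [n]^(r), at least one of the following holds: (i) |𝒜⟨k⟩| ≤ (α^(r−k+1) − 1)·C(n,k−1) + c·n^(k−2); or (ii) there exists a set D ∈ [n]^(k−1) such that the family 𝒞 = {A∖D : A ∈ 𝒜, D ⊆ A} ⊆ [n]^(r−k+1) satisfies |𝒞⟨1⟩| = α^(r−k+1) and ℬ = {B ∈ [n]^(r) : there exists C ∈ 𝒞 with C ⊆ B} is contained in 𝒜. -/

import Mathlib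

open Finset

/-- The ground set `[n] = {1, …, n}`. -/
def grd (n : ℕ) : Finset ℕ := Finset.Icc 1 n

/-- `[n]^(k)`: all `k`-element subsets of `[n]`. -/
def ksets (n k : ℕ) : Finset (Finset ℕ) := (grd n).powersetCard k

/-- A family of sets is intersecting if any two of its members meet. -/
def IsIntersecting (𝒜 : Finset (Finset ℕ)) : Prop :=
  ∀ A ∈ 𝒜, ∀ B ∈ 𝒜, (A ∩ B).Nonempty

/-- `𝒜⟨k⟩`: the collection of `k`-sets arising as pairwise intersections of members of `𝒜`. -/
def interk (𝒜 : Finset (Finset ℕ)) (k : ℕ) : Finset (Finset ℕ) :=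
  ((𝒜 ×ˢ 𝒜).image fun p => p.1 ∩ p.2).filter fun C => C.card = k

/-- `𝒜⟨1⟩` identified with a set of points: all `x` with `{x} = A ∩ B` for some `A, B ∈ 𝒜`. -/
def interPts (𝒜 : Finset (Finset ℕ)) : Finset ℕ :=
  (interk 𝒜 1).sup id

/-- `β(n,r,k)`: the maximum of `|𝒜⟨k⟩|` over intersecting families `𝒜 ⊆ [n]^(r)`. -/
noncomputable def beta (n r k : ℕ) : ℕ :=
  sSup {m | ∃ 𝒜 ⊆ ksets n r, IsIntersecting 𝒜 ∧ (interk 𝒜 k).card = m}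

/-- `α^(r) = max {β(n,r,1) : n ≥ r}` (finite by Lovász's theorem). -/
noncomputable def alpha (r : ℕ) : ℕ :=
  sSup {m | ∃ n, r ≤ n ∧ beta n r 1 = m}

-- basic lemmas

lemma mem_ksets {n k : ℕ} {A : Finset ℕ} : A ∈ ksets n k ↔ A ⊆ grd n ∧ A.card = k := by
  simp [ksets, Finset.mem_powersetCard]

lemma card_grd (n : ℕ) : (grd n).card = n := by simp [grd]

lemma mem_interk {𝒜 : Finset (Finset ℕ)} {k : ℕ} {C : Finset ℕ} :
    C ∈ interk 𝒜 k ↔ (∃ A ∈ 𝒜, ∃ B ∈ 𝒜, A ∩ B = C) ∧ C.card = k := by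
  simp only [interk, Finset.mem_filter, Finset.mem_image, Finset.mem_product, Prod.exists]
  constructor
  · rintro ⟨⟨a, b, ⟨ha, hb⟩, hab⟩, hc⟩
    exact ⟨⟨a, ha, b, hb, hab⟩, hc⟩
  · rintro ⟨⟨a, ha, b, hb, hab⟩, hc⟩
    exact ⟨⟨a, b, ⟨ha, hb⟩, hab⟩, hc⟩

lemma interk_subset_grd {n r : ℕ} {𝒜 : Finset (Finset ℕ)} (h𝒜 : 𝒜 ⊆ ksets n r)
    {k : ℕ} {C : Finset ℕ} (hC : C ∈ interk 𝒜 k) : C ⊆ grd n := by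
  obtain ⟨⟨A, hA, B, hB, hAB⟩, -⟩ := mem_interk.1 hC
  intro x hx
  exact (mem_ksets.1 (h𝒜 hA)).1 (Finset.mem_of_mem_inter_left (hAB ▸ hx))

lemma insert_inter_insert' (v : ℕ) (a b : Finset ℕ) :
    insert v a ∩ insert v b = insert v (a ∩ b) := by
  ext x; simp [Finset.mem_inter, Finset.mem_insert]; tauto

-- sunflower lemma

theorem sunflower_lemma (b : ℕ) : ∀ (m : ℕ) (F : Finset (Finset ℕ)),
    (∀ U ∈ F, U.card = b) → Nat.factorial b * m ^ b < F.card →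
    ∃ S ⊆ F, S.card = m + 1 ∧ ∃ Y : Finset ℕ, ∀ U ∈ S, ∀ V ∈ S, U ≠ V → U ∩ V = Y := by
  induction b with
  | zero =>
    intro m F hcard hlt
    -- every member is ∅, F ⊆ {∅}
    have hsub : F ⊆ {(∅ : Finset ℕ)} := by
      intro U hU
      simp only [Finset.mem_singleton]
      exact Finset.card_eq_zero.1 (hcard U hU)
    have : F.card ≤ 1 := le_trans (Finset.card_le_card hsub) (by simp)
    simp only [pow_zero, Nat.factorial_zero, mul_one] at hlt
    omega
  | succ b ih =>
    intro m F hcard hlt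
    rcases Nat.eq_zero_or_pos m with hm | hm
    · -- m = 0 : any single set works
      subst hm
      have hlt' : 0 < F.card := by
        calc 0 ≤ (b+1).factorial * 0 ^ (b+1) := Nat.zero_le _
          _ < F.card := hlt
      obtain ⟨U, hU⟩ := Finset.card_pos.1 hlt'
      exact ⟨{U}, Finset.singleton_subset_iff.2 hU, by simp, ∅, by simp⟩
    -- maximal pairwise disjoint subfamily
    set P : Finset (Finset (Finset ℕ)) :=
      F.powerset.filter (fun M => ∀ U ∈ M, ∀ V ∈ M, U ≠ V → U ∩ V = ∅) with hP
    have hPne : P.Nonempty := ⟨∅, by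
      rw [hP, Finset.mem_filter]
      exact ⟨Finset.empty_mem_powerset F, by simp⟩⟩
    obtain ⟨M, hMP, hMmax⟩ := Finset.exists_max_image P Finset.card hPne
    have hMF : M ⊆ F := Finset.mem_powerset.1 (Finset.mem_filter.1 hMP).1
    have hMdisj : ∀ U ∈ M, ∀ V ∈ M, U ≠ V → U ∩ V = ∅ := (Finset.mem_filter.1 hMP).2
    by_cases hMc : m + 1 ≤ M.card
    · obtain ⟨S, hSM, hScard⟩ := Finset.exists_subset_card_eq hMc
      exact ⟨S, hSM.trans hMF, hScard, ∅, fun U hU V hV hUV => hMdisj U (hSM hU) V (hSM hV) hUV⟩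
    push_neg at hMc
    have hMc' : M.card ≤ m := by omega
    set V : Finset ℕ := M.sup id with hV
    have hVcard : V.card ≤ m * (b + 1) := by
      have h1 : V = M.biUnion id := Finset.sup_eq_biUnion M id
      calc V.card ≤ ∑ W ∈ M, (id W).card := by rw [h1]; exact Finset.card_biUnion_le
        _ ≤ ∑ W ∈ M, (b+1) := Finset.sum_le_sum (fun W hW => le_of_eq (hcard W (hMF hW)))
        _ = M.card * (b+1) := by rw [Finset.sum_const, smul_eq_mul]
        _ ≤ m * (b+1) := Nat.mul_le_mul_right _ hMc'
    -- every member of F meets V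
    have hmeet : ∀ U ∈ F, (U ∩ V).Nonempty := by
      intro U hU
      by_contra hdisj
      rw [Finset.not_nonempty_iff_eq_empty] at hdisj
      have hUM : U ∉ M := by
        intro hUM
        have hUV : U ⊆ V := Finset.le_sup (f := id) hUM
        have h2 : U ∩ V = U := Finset.inter_eq_left.2 hUV
        rw [hdisj] at h2
        have h3 := hcard U hU
        rw [← h2] at h3
        simp at h3
      have hM' : insert U M ∈ P := by
        rw [hP, Finset.mem_filter, Finset.mem_powerset]
        constructor
        · exact Finset.insert_subset hU hMF
        · intro X hX Z hZ hXZ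
          rcases Finset.mem_insert.1 hX with rfl | hXM
          · rcases Finset.mem_insert.1 hZ with rfl | hZM
            · exact absurd rfl hXZ
            · have hZV : Z ⊆ V := Finset.le_sup (f := id) hZM
              apply Finset.eq_empty_of_forall_notMem
              intro x hx
              have : x ∈ X ∩ V := Finset.mem_inter.2 ⟨(Finset.mem_inter.1 hx).1, hZV (Finset.mem_inter.1 hx).2⟩
              rw [hdisj] at this; exact absurd this (Finset.notMem_empty x)
          · rcases Finset.mem_insert.1 hZ with rfl | hZM
            · have hXV : X ⊆ V := Finset.le_sup (f := id) hXM
              apply Finset.eq_empty_of_forall_notMem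
              intro x hx
              have : x ∈ Z ∩ V := Finset.mem_inter.2 ⟨(Finset.mem_inter.1 hx).2, hXV (Finset.mem_inter.1 hx).1⟩
              rw [hdisj] at this; exact absurd this (Finset.notMem_empty x)
            · exact hMdisj X hXM Z hZM hXZ
      have := hMmax _ hM'
      rw [Finset.card_insert_of_notMem hUM] at this
      omega
    -- pigeonhole
    have hsum : F.card ≤ ∑ v ∈ V, (F.filter (fun U => v ∈ U)).card := by
      have h1 : ∀ U ∈ F, (1 : ℕ) ≤ (U ∩ V).card := by
        intro U hU; exact Finset.card_pos.2 (hmeet U hU)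
      calc F.card = ∑ U ∈ F, 1 := by simp
        _ ≤ ∑ U ∈ F, (U ∩ V).card := Finset.sum_le_sum h1
        _ = ∑ U ∈ F, ∑ v ∈ V, (if v ∈ U then 1 else 0) := by
            apply Finset.sum_congr rfl
            intro U hU
            rw [Finset.sum_ite_mem V U (fun _ => (1:ℕ)), Finset.sum_const, smul_eq_mul, mul_one,
              Finset.inter_comm]
        _ = ∑ v ∈ V, ∑ U ∈ F, (if v ∈ U then 1 else 0) := Finset.sum_comm
        _ = ∑ v ∈ V, (F.filter (fun U => v ∈ U)).card := by
            apply Finset.sum_congr rfl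
            intro v hv
            rw [Finset.card_filter]
    have hpigeon : ∃ v ∈ V, Nat.factorial b * m ^ b < (F.filter (fun U => v ∈ U)).card := by
      by_contra hcon
      push_neg at hcon
      have : ∑ v ∈ V, (F.filter (fun U => v ∈ U)).card ≤ V.card * (Nat.factorial b * m ^ b) := by
        calc ∑ v ∈ V, (F.filter (fun U => v ∈ U)).card ≤ ∑ v ∈ V, Nat.factorial b * m ^ b :=
              Finset.sum_le_sum (fun v hv => hcon v hv)
          _ = V.card * (Nat.factorial b * m ^ b) := by rw [Finset.sum_const, smul_eq_mul]
      have hbig : F.card ≤ m * (b+1) * (Nat.factorial b * m ^ b) :=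
        le_trans (le_trans hsum this) (Nat.mul_le_mul_right _ hVcard)
      have : m * (b+1) * (Nat.factorial b * m ^ b) = Nat.factorial (b+1) * m ^ (b+1) := by
        rw [Nat.factorial_succ]; ring
      rw [this] at hbig
      omega
    obtain ⟨v, hvV, hvcard⟩ := hpigeon
    set Fv := F.filter (fun U => v ∈ U) with hFv
    set G := Fv.image (fun U => U.erase v) with hG
    have hinj : Set.InjOn (fun U : Finset ℕ => U.erase v) ↑Fv := by
      intro X hX Z hZ hXZ
      have hvX : v ∈ X := (Finset.mem_filter.1 (Finset.mem_coe.1 hX)).2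
      have hvZ : v ∈ Z := (Finset.mem_filter.1 (Finset.mem_coe.1 hZ)).2
      simp only at hXZ
      rw [← Finset.insert_erase hvX, ← Finset.insert_erase hvZ, hXZ]
    have hGcard : G.card = Fv.card := Finset.card_image_of_injOn hinj
    have hGunif : ∀ W ∈ G, W.card = b := by
      intro W hW
      obtain ⟨U, hU, rfl⟩ := Finset.mem_image.1 hW
      rw [Finset.card_erase_of_mem (Finset.mem_filter.1 hU).2, hcard U (Finset.mem_filter.1 hU).1]
      omega
    obtain ⟨S', hS'G, hS'card, Y', hY'⟩ := ih m G hGunif (by omega)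
    refine ⟨S'.image (insert v), ?_, ?_, insert v Y', ?_⟩
    · intro U hU
      obtain ⟨W, hW, rfl⟩ := Finset.mem_image.1 hU
      obtain ⟨U', hU', rfl⟩ := Finset.mem_image.1 (hS'G hW)
      rw [Finset.insert_erase (Finset.mem_filter.1 hU').2]
      exact (Finset.mem_filter.1 hU').1
    · rw [Finset.card_image_of_injOn, hS'card]
      intro X hX Z hZ hXZ
      have hvX : v ∉ X := by
        obtain ⟨U', hU', rfl⟩ := Finset.mem_image.1 (hS'G (Finset.mem_coe.1 hX))
        exact Finset.notMem_erase v U'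
      have hvZ : v ∉ Z := by
        obtain ⟨U', hU', rfl⟩ := Finset.mem_image.1 (hS'G (Finset.mem_coe.1 hZ))
        exact Finset.notMem_erase v U'
      rw [← Finset.erase_insert hvX, ← Finset.erase_insert hvZ, hXZ]
    · intro U hU W hW hUW
      obtain ⟨X, hX, rfl⟩ := Finset.mem_image.1 hU
      obtain ⟨Z, hZ, rfl⟩ := Finset.mem_image.1 hW
      have hXZ : X ≠ Z := fun h => hUW (by rw [h])
      have : X ∩ Z = Y' := hY' X hX Z hZ hXZ
      rw [insert_inter_insert', this]

-- Lovász finiteness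
theorem lovasz (s : ℕ) (hs : 1 ≤ s) : ∃ L : ℕ, ∀ (n : ℕ) (𝒜 : Finset (Finset ℕ)),
    𝒜 ⊆ ksets n s → IsIntersecting 𝒜 → (interk 𝒜 1).card ≤ L := by
  classical
  refine ⟨4^(2*s) * (Nat.factorial (2*s-1) * (4^(2*s-1)) ^ (2*s-1)), ?_⟩
  intro n 𝒜 h𝒜 hint
  by_contra hcon
  push_neg at hcon
  set b := 2*s-1 with hb
  set m' := 4^b with hm'
  set P := interk 𝒜 1 with hPdef
  have hw : ∀ C : Finset ℕ, ∃ p : Finset ℕ × Finset ℕ,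
      C ∈ P → p.1 ∈ 𝒜 ∧ p.2 ∈ 𝒜 ∧ p.1 ∩ p.2 = C := by
    intro C
    by_cases hC : C ∈ P
    · obtain ⟨⟨A, hA, B, hB, hAB⟩, -⟩ := mem_interk.1 hC
      exact ⟨(A, B), fun _ => ⟨hA, hB, hAB⟩⟩
    · exact ⟨(∅, ∅), fun h => absurd h hC⟩
  choose f hf using hw
  set u : Finset ℕ → Finset ℕ := fun C => (f C).1 ∪ (f C).2 with hu
  have hcardU : ∀ C ∈ P, (u C).card = b := by
    intro C hC
    obtain ⟨hA, hB, hAB⟩ := hf C hC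
    have h1 : (f C).1.card = s := (mem_ksets.1 (h𝒜 hA)).2
    have h2 : (f C).2.card = s := (mem_ksets.1 (h𝒜 hB)).2
    have h3 : C.card = 1 := (mem_interk.1 hC).2
    have h4 := Finset.card_union_add_card_inter (f C).1 (f C).2
    rw [h1, h2, hAB, h3] at h4
    simp only [hu, hb]
    omega
  set W := P.image u with hW
  have hPW : P.card ≤ 4^(2*s) * W.card := by
    apply Finset.card_le_mul_card_image
    intro U hU
    obtain ⟨C0, hC0, hC0U⟩ := Finset.mem_image.1 hU
    have hUcard : U.card = b := by rw [← hC0U]; exact hcardU C0 hC0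
    have hmap : ∀ C ∈ P.filter (fun C => u C = U), f C ∈ U.powerset ×ˢ U.powerset := by
      intro C hC
      obtain ⟨hCP, hCU⟩ := Finset.mem_filter.1 hC
      rw [Finset.mem_product, Finset.mem_powerset, Finset.mem_powerset]
      exact ⟨hCU ▸ Finset.subset_union_left, hCU ▸ Finset.subset_union_right⟩
    have hinj : Set.InjOn f ↑(P.filter fun C => u C = U) := by
      intro C1 h1 C2 h2 h12
      have h1P := (Finset.mem_filter.1 (Finset.mem_coe.1 h1)).1
      have h2P := (Finset.mem_filter.1 (Finset.mem_coe.1 h2)).1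
      have e1 := (hf C1 h1P).2.2
      have e2 := (hf C2 h2P).2.2
      rw [← e1, ← e2, h12]
    calc (P.filter fun C => u C = U).card
        ≤ (U.powerset ×ˢ U.powerset).card := Finset.card_le_card_of_injOn f hmap hinj
      _ = 2^U.card * 2^U.card := by rw [Finset.card_product, Finset.card_powerset]
      _ ≤ 2^(2*s) * 2^(2*s) := by
          have : U.card ≤ 2*s := by rw [hUcard, hb]; omega
          exact Nat.mul_le_mul (Nat.pow_le_pow_right (by norm_num) this)
            (Nat.pow_le_pow_right (by norm_num) this)
      _ = 4^(2*s) := by rw [← mul_pow]; norm_num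
  have hWlt : Nat.factorial b * m' ^ b < W.card := by
    have h4pos : 0 < 4^(2*s) := Nat.pow_pos (by norm_num)
    by_contra hW2
    push_neg at hW2
    have : P.card ≤ 4^(2*s) * (Nat.factorial b * m' ^ b) :=
      le_trans hPW (Nat.mul_le_mul_left _ hW2)
    omega
  have hWunif : ∀ U ∈ W, U.card = b := by
    intro U hU
    obtain ⟨C0, hC0, rfl⟩ := Finset.mem_image.1 hU
    exact hcardU C0 hC0
  obtain ⟨S, hSW, hScard, Y, hY⟩ := sunflower_lemma b m' W hWunif hWlt
  have hg : ∀ U : Finset ℕ, ∃ C : Finset ℕ, U ∈ S → C ∈ P ∧ u C = U := by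
    intro U
    by_cases hU : U ∈ S
    · obtain ⟨C, hC, hCU⟩ := Finset.mem_image.1 (hSW hU)
      exact ⟨C, fun _ => ⟨hC, hCU⟩⟩
    · exact ⟨∅, fun h => absurd h hU⟩
  choose g hgspec using hg
  -- two distinct elements of S, so Y has card ≤ b
  have hm'pos : 1 ≤ m' := Nat.one_le_iff_ne_zero.2 (by positivity)
  have hS2 : 1 < S.card := by omega
  obtain ⟨U0, hU0, V0, hV0, hU0V0⟩ := Finset.one_lt_card.1 hS2
  have hYcard : Y.card ≤ b := by
    have := hY U0 hU0 V0 hV0 hU0V0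
    calc Y.card = (U0 ∩ V0).card := by rw [this]
      _ ≤ U0.card := Finset.card_le_card Finset.inter_subset_left
      _ = b := hWunif U0 (hSW hU0)
  -- pigeonhole on traces
  set τ : Finset ℕ → Finset ℕ × Finset ℕ :=
    fun U => ((f (g U)).1 ∩ Y, (f (g U)).2 ∩ Y) with hτ
  have hmaps : ∀ U ∈ S, τ U ∈ Y.powerset ×ˢ Y.powerset := by
    intro U hU
    rw [Finset.mem_product, Finset.mem_powerset, Finset.mem_powerset]
    exact ⟨Finset.inter_subset_right, Finset.inter_subset_right⟩
  have hcardlt : (Y.powerset ×ˢ Y.powerset).card < S.card := by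
    rw [Finset.card_product, Finset.card_powerset, hScard]
    calc 2^Y.card * 2^Y.card = 4^Y.card := by rw [← mul_pow]; norm_num
      _ ≤ 4^b := Nat.pow_le_pow_right (by norm_num) hYcard
      _ < m' + 1 := by rw [hm']; omega
  obtain ⟨U, hU, V, hV, hUV, hτUV⟩ :=
    Finset.exists_ne_map_eq_of_card_lt_of_maps_to hcardlt hmaps
  -- derive contradiction
  obtain ⟨hCUP, hCUu⟩ := hgspec U hU
  obtain ⟨hCVP, hCVu⟩ := hgspec V hV
  set CU := g U
  set CV := g V
  obtain ⟨hA, hB, hAB⟩ := hf CU hCUP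
  obtain ⟨hA', hB', hA'B'⟩ := hf CV hCVP
  set A := (f CU).1
  set B := (f CU).2
  set A' := (f CV).1
  set B' := (f CV).2
  have hYUV : U ∩ V = Y := hY U hU V hV hUV
  have tA : A ∩ Y = A' ∩ Y := congrArg Prod.fst hτUV
  have tB : B ∩ Y = B' ∩ Y := congrArg Prod.snd hτUV
  have hsubY : A ∩ B' ⊆ Y := by
    rw [← hYUV]
    apply Finset.inter_subset_inter
    · rw [← hCUu]; exact Finset.subset_union_left
    · rw [← hCVu]; exact Finset.subset_union_right
  have hne : (A ∩ B').Nonempty := hint A hA B' hB'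
  have e0 : A ∩ B' = (A ∩ Y) ∩ (B' ∩ Y) := by
    ext x
    simp only [Finset.mem_inter]
    constructor
    · intro hx
      have hxY := hsubY (Finset.mem_inter.2 hx)
      exact ⟨⟨hx.1, hxY⟩, hx.2, hxY⟩
    · rintro ⟨⟨h1, -⟩, h2, -⟩
      exact ⟨h1, h2⟩
  have e1 : A ∩ B' = CU ∩ Y := by
    rw [e0, ← tB]
    rw [show (A ∩ Y) ∩ (B ∩ Y) = (A ∩ B) ∩ Y by
      ext x; simp only [Finset.mem_inter]; tauto, hAB]
  have e2 : A ∩ B' = CV ∩ Y := by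
    rw [e0, tA]
    rw [show (A' ∩ Y) ∩ (B' ∩ Y) = (A' ∩ B') ∩ Y by
      ext x; simp only [Finset.mem_inter]; tauto, hA'B']
  have hCUcard : CU.card = 1 := (mem_interk.1 hCUP).2
  have hCVcard : CV.card = 1 := (mem_interk.1 hCVP).2
  obtain ⟨x, hx⟩ := Finset.card_eq_one.1 hCUcard
  obtain ⟨x', hx'⟩ := Finset.card_eq_one.1 hCVcard
  have hCUY : CU ∩ Y = CU := by
    rw [hx]
    have : x ∈ Y := by
      obtain ⟨z, hz⟩ := hne
      rw [e1, hx] at hz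
      have := Finset.mem_inter.1 hz
      rw [Finset.mem_singleton.1 this.1] at this
      exact this.2
    ext z; simp only [Finset.mem_inter, Finset.mem_singleton]
    exact ⟨fun h => h.1, fun h => ⟨h, h ▸ this⟩⟩
  have hCVY : CV ∩ Y = CV := by
    rw [hx']
    have : x' ∈ Y := by
      obtain ⟨z, hz⟩ := hne
      rw [e2, hx'] at hz
      have := Finset.mem_inter.1 hz
      rw [Finset.mem_singleton.1 this.1] at this
      exact this.2
    ext z; simp only [Finset.mem_inter, Finset.mem_singleton]
    exact ⟨fun h => h.1, fun h => ⟨h, h ▸ this⟩⟩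
  have : CU = CV := by rw [← hCUY, ← hCVY, ← e1, ← e2]
  apply hUV
  rw [← hCUu, ← hCVu, this]

-- interPts card equals number of singleton intersections
lemma interPts_card (𝒜 : Finset (Finset ℕ)) : (interPts 𝒜).card = (interk 𝒜 1).card := by
  classical
  have hsing : ∀ C ∈ interk 𝒜 1, C.card = 1 := fun C hC => (mem_interk.1 hC).2
  rw [interPts, Finset.sup_eq_biUnion, Finset.card_biUnion]
  · have : ∀ C ∈ interk 𝒜 1, (id C).card = 1 := hsing
    rw [Finset.sum_congr rfl this, Finset.sum_const, smul_eq_mul, mul_one]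
  · intro C1 h1 C2 h2 h12
    obtain ⟨x1, e1⟩ := Finset.card_eq_one.1 (hsing C1 h1)
    obtain ⟨x2, e2⟩ := Finset.card_eq_one.1 (hsing C2 h2)
    simp only [id, e1, e2]
    simp only [Function.onFun, id]; rw [Finset.disjoint_singleton]
    intro h
    exact h12 (by rw [e1, e2, h])

lemma interk_subset_powerset {n r : ℕ} {𝒜 : Finset (Finset ℕ)} (h𝒜 : 𝒜 ⊆ ksets n r) (k : ℕ) :
    interk 𝒜 k ⊆ (grd n).powerset := fun C hC =>
  Finset.mem_powerset.2 (interk_subset_grd h𝒜 hC)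

lemma le_beta {n r k m : ℕ} {𝒜 : Finset (Finset ℕ)} (h𝒜 : 𝒜 ⊆ ksets n r)
    (hint : IsIntersecting 𝒜) (hm : (interk 𝒜 k).card = m) : m ≤ beta n r k := by
  apply le_csSup
  · refine ⟨2^n, ?_⟩
    rintro x ⟨ℬ, hℬ, hintB, hx⟩
    rw [← hx]
    calc (interk ℬ k).card ≤ (grd n).powerset.card :=
          Finset.card_le_card (interk_subset_powerset hℬ k)
      _ = 2^n := by rw [Finset.card_powerset, card_grd]
  · exact ⟨𝒜, h𝒜, hint, hm⟩

lemma beta_le {n r k M : ℕ}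
    (h : ∀ 𝒜 : Finset (Finset ℕ), 𝒜 ⊆ ksets n r → IsIntersecting 𝒜 → (interk 𝒜 k).card ≤ M) :
    beta n r k ≤ M := by
  apply csSup_le
  · exact ⟨0, ∅, by simp [Finset.empty_subset], fun A hA => absurd hA (Finset.notMem_empty A),
      by simp [interk]⟩
  · rintro m ⟨𝒜, h𝒜, hint, hm⟩
    rw [← hm]
    exact h 𝒜 h𝒜 hint

lemma alpha_bddAbove {s : ℕ} (hs : 1 ≤ s) :
    BddAbove {m | ∃ n, s ≤ n ∧ beta n s 1 = m} := by
  obtain ⟨L, hL⟩ := lovasz s hs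
  refine ⟨L, ?_⟩
  rintro m ⟨n, hn, hm⟩
  rw [← hm]
  exact beta_le (fun 𝒜 h𝒜 hint => hL n 𝒜 h𝒜 hint)

lemma beta_le_alpha {n s : ℕ} (hs : 1 ≤ s) (hn : s ≤ n) : beta n s 1 ≤ alpha s :=
  le_csSup (alpha_bddAbove hs) ⟨n, hn, rfl⟩

lemma card_interk_le_alpha {n s : ℕ} {𝒞 : Finset (Finset ℕ)} (hs : 1 ≤ s) (hn : s ≤ n)
    (h𝒞 : 𝒞 ⊆ ksets n s) (hint : IsIntersecting 𝒞) : (interk 𝒞 1).card ≤ alpha s :=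
  le_trans (le_beta h𝒞 hint rfl) (beta_le_alpha hs hn)

lemma alpha_pos {s : ℕ} (hs : 1 ≤ s) : 1 ≤ alpha s := by
  classical
  set A : Finset ℕ := Finset.Icc 1 s with hA
  set B : Finset ℕ := Finset.Icc s (2*s-1) with hB
  have hAcard : A.card = s := by rw [hA, Nat.card_Icc]; omega
  have hBcard : B.card = s := by rw [hB, Nat.card_Icc]; omega
  have hsA : s ∈ A := by rw [hA]; simp [Finset.mem_Icc]; omega
  have hsB : s ∈ B := by rw [hB]; simp [Finset.mem_Icc]; omega
  have hsub : ({A, B} : Finset (Finset ℕ)) ⊆ ksets (2*s-1) s := by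
    intro X hX
    rcases Finset.mem_insert.1 hX with rfl | hX
    · exact mem_ksets.2 ⟨by intro x hx; rw [hA, Finset.mem_Icc] at hx; simp [grd, Finset.mem_Icc]; omega, hAcard⟩
    · rw [Finset.mem_singleton.1 hX]
      exact mem_ksets.2 ⟨by intro x hx; rw [hB, Finset.mem_Icc] at hx; simp [grd, Finset.mem_Icc]; omega, hBcard⟩
  have hint : IsIntersecting {A, B} := by
    intro X hX Y hY
    have hsX : s ∈ X := by
      rcases Finset.mem_insert.1 hX with rfl | hX
      · exact hsA
      · rw [Finset.mem_singleton.1 hX]; exact hsB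
    have hsY : s ∈ Y := by
      rcases Finset.mem_insert.1 hY with rfl | hY
      · exact hsA
      · rw [Finset.mem_singleton.1 hY]; exact hsB
    exact ⟨s, Finset.mem_inter.2 ⟨hsX, hsY⟩⟩
  have hABs : A ∩ B = {s} := by
    ext x
    rw [Finset.mem_inter, hA, hB, Finset.mem_Icc, Finset.mem_Icc, Finset.mem_singleton]
    omega
  have hmem : ({s} : Finset ℕ) ∈ interk {A, B} 1 := by
    rw [mem_interk]
    exact ⟨⟨A, by simp, B, by simp, hABs⟩, by simp⟩
  have h1 : 1 ≤ (interk {A, B} 1).card := Finset.card_pos.2 ⟨{s}, hmem⟩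
  calc 1 ≤ (interk {A, B} 1).card := h1
    _ ≤ beta (2*s-1) s 1 := le_beta hsub hint rfl
    _ ≤ alpha s := beta_le_alpha hs (by omega)

-- link and Exact
def link (𝒜 : Finset (Finset ℕ)) (D : Finset ℕ) : Finset (Finset ℕ) :=
  (𝒜.filter fun A => D ⊆ A).image fun A => A \ D

def Exact (𝒜 : Finset (Finset ℕ)) (D : Finset ℕ) : Prop := ∃ A ∈ 𝒜, ∃ B ∈ 𝒜, A ∩ B = D

lemma mem_link {𝒜 : Finset (Finset ℕ)} {D C : Finset ℕ} :
    C ∈ link 𝒜 D ↔ ∃ A ∈ 𝒜, D ⊆ A ∧ A \ D = C := by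
  simp only [link, Finset.mem_image, Finset.mem_filter]
  constructor
  · rintro ⟨A, ⟨hA, hDA⟩, hC⟩; exact ⟨A, hA, hDA, hC⟩
  · rintro ⟨A, hA, hDA, hC⟩; exact ⟨A, ⟨hA, hDA⟩, hC⟩

lemma link_subset_ksets {n r j : ℕ} {𝒜 : Finset (Finset ℕ)} {D : Finset ℕ}
    (h𝒜 : 𝒜 ⊆ ksets n r) (hD : D.card = j) : link 𝒜 D ⊆ ksets n (r - j) := by
  intro C hC
  obtain ⟨A, hA, hDA, rfl⟩ := mem_link.1 hC
  obtain ⟨hAg, hAc⟩ := mem_ksets.1 (h𝒜 hA)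
  refine mem_ksets.2 ⟨fun x hx => hAg (Finset.mem_sdiff.1 hx).1, ?_⟩
  rw [Finset.card_sdiff_of_subset hDA, hAc, hD]

lemma sdiff_inter_sdiff' (A B D : Finset ℕ) : (A \ D) ∩ (B \ D) = (A ∩ B) \ D := by
  ext x; simp only [Finset.mem_inter, Finset.mem_sdiff]; tauto

lemma link_intersecting {𝒜 : Finset (Finset ℕ)} {D : Finset ℕ}
    (hint : IsIntersecting 𝒜) (hNE : ¬ Exact 𝒜 D) : IsIntersecting (link 𝒜 D) := by
  intro C1 h1 C2 h2
  obtain ⟨A, hA, hDA, rfl⟩ := mem_link.1 h1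
  obtain ⟨B, hB, hDB, rfl⟩ := mem_link.1 h2
  rw [sdiff_inter_sdiff']
  rw [Finset.sdiff_nonempty]
  intro hsub
  exact hNE ⟨A, hA, B, hB, le_antisymm hsub (Finset.subset_inter hDA hDB)⟩

-- extension counting: k-intersections containing D inject into singleton
-- intersections of the link of any F ⊆ D with the right "exactness" at level F
lemma ext_inj_general {𝒜 : Finset (Finset ℕ)} {D : Finset ℕ} {t : ℕ}
    (hD : D.card = t - 1) (ht : 1 ≤ t)
    (S : Finset (Finset ℕ)) (hS : S ⊆ (interk 𝒜 t).filter (fun C => D ⊆ C)) :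
    S.card ≤ (interk (link 𝒜 D) 1).card := by
  classical
  apply Finset.card_le_card_of_injOn (fun C => C \ D)
  · intro C hC
    obtain ⟨hCk, hDC⟩ := Finset.mem_filter.1 (hS hC)
    obtain ⟨⟨A, hA, B, hB, hAB⟩, hCc⟩ := mem_interk.1 hCk
    have hDA : D ⊆ A := hDC.trans (hAB ▸ Finset.inter_subset_left)
    have hDB : D ⊆ B := hDC.trans (hAB ▸ Finset.inter_subset_right)
    refine mem_interk.2 ⟨⟨A \ D, mem_link.2 ⟨A, hA, hDA, rfl⟩,
      B \ D, mem_link.2 ⟨B, hB, hDB, rfl⟩, ?_⟩, ?_⟩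
    · rw [sdiff_inter_sdiff', hAB]
    · rw [Finset.card_sdiff_of_subset hDC, hCc, hD]; omega
  · intro C1 h1 C2 h2 h12
    have hD1 : D ⊆ C1 := (Finset.mem_filter.1 (hS (Finset.mem_coe.1 h1))).2
    have hD2 : D ⊆ C2 := (Finset.mem_filter.1 (hS (Finset.mem_coe.1 h2))).2
    simp only at h12
    rw [← Finset.sdiff_union_of_subset hD1, ← Finset.sdiff_union_of_subset hD2, h12]

-- bad sets
noncomputable def badk (𝒜 : Finset (Finset ℕ)) (t : ℕ) : Finset (Finset ℕ) :=
  @Finset.filter _ (fun C => ∀ y ∈ C, Exact 𝒜 (C.erase y)) (Classical.decPred _) (interk 𝒜 t)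

lemma mem_badk {𝒜 : Finset (Finset ℕ)} {t : ℕ} {C : Finset ℕ} :
    C ∈ badk 𝒜 t ↔ C ∈ interk 𝒜 t ∧ ∀ y ∈ C, Exact 𝒜 (C.erase y) := by
  rw [badk]
  exact @Finset.mem_filter _ _ (Classical.decPred _) _ _

lemma badk_one {𝒜 : Finset (Finset ℕ)} (hint : IsIntersecting 𝒜) : badk 𝒜 1 = ∅ := by
  classical
  apply Finset.eq_empty_of_forall_notMem
  intro C hC
  obtain ⟨hCk, hbad⟩ := mem_badk.1 hC
  obtain ⟨y, hy⟩ := Finset.card_eq_one.1 (mem_interk.1 hCk).2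
  have hyC : y ∈ C := by rw [hy]; exact Finset.mem_singleton_self y
  obtain ⟨A, hA, B, hB, hAB⟩ := hbad y hyC
  have : C.erase y = ∅ := by rw [hy]; simp
  rw [this] at hAB
  obtain ⟨z, hz⟩ := hint A hA B hB
  rw [hAB] at hz
  exact Finset.notMem_empty z hz

lemma erase_sdiff_erase {C D : Finset ℕ} {y : ℕ} (hyD : y ∈ D) (hDC : D ⊆ C) :
    (C.erase y) \ (D.erase y) = C \ D := by
  ext x
  simp only [Finset.mem_sdiff, Finset.mem_erase]
  constructor
  · rintro ⟨⟨hxy, hxC⟩, hx2⟩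
    refine ⟨hxC, fun hxD => hx2 ⟨hxy, hxD⟩⟩
  · rintro ⟨hxC, hxD⟩
    have hxy : x ≠ y := fun h => hxD (h ▸ hyD)
    exact ⟨⟨hxy, hxC⟩, fun h => hxD h.2⟩

lemma interk_card_le {n r t : ℕ} {𝒜 : Finset (Finset ℕ)} (h𝒜 : 𝒜 ⊆ ksets n r)
    (hint : IsIntersecting 𝒜) (ht : 1 ≤ t) (htr : t ≤ r) (hrn : r ≤ n) :
    (interk 𝒜 t).card ≤ Nat.choose n (t-1) * alpha (r - t + 1) + (badk 𝒜 t).card := by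
  classical
  set Good := (ksets n (t-1)).filter (fun D => ¬ Exact 𝒜 D) with hGood
  have hcover : interk 𝒜 t ⊆
      (Good.biUnion (fun D => (interk 𝒜 t).filter (fun C => D ⊆ C))) ∪ badk 𝒜 t := by
    intro C hC
    by_cases hb : C ∈ badk 𝒜 t
    · exact Finset.mem_union_right _ hb
    have : ¬ ∀ y ∈ C, Exact 𝒜 (C.erase y) := fun h => hb (mem_badk.2 ⟨hC, h⟩)
    push_neg at this
    obtain ⟨y, hy, hNE⟩ := this
    have hCc : C.card = t := (mem_interk.1 hC).2
    have hCg : C ⊆ grd n := interk_subset_grd h𝒜 hC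
    have hD : C.erase y ∈ Good := by
      rw [hGood, Finset.mem_filter]
      exact ⟨mem_ksets.2 ⟨(Finset.erase_subset y C).trans hCg,
        by rw [Finset.card_erase_of_mem hy, hCc]⟩, hNE⟩
    exact Finset.mem_union_left _ (Finset.mem_biUnion.2
      ⟨C.erase y, hD, Finset.mem_filter.2 ⟨hC, Finset.erase_subset y C⟩⟩)
  have hper : ∀ D ∈ Good, ((interk 𝒜 t).filter (fun C => D ⊆ C)).card ≤ alpha (r - t + 1) := by
    intro D hD
    rw [hGood, Finset.mem_filter] at hD
    obtain ⟨hDk, hDE⟩ := hD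
    obtain ⟨hDg, hDc⟩ := mem_ksets.1 hDk
    have h1 : ((interk 𝒜 t).filter (fun C => D ⊆ C)).card ≤ (interk (link 𝒜 D) 1).card :=
      ext_inj_general hDc ht _ (le_refl _)
    have heq : r - (t-1) = r - t + 1 := by omega
    have h2 : (interk (link 𝒜 D) 1).card ≤ alpha (r - t + 1) := by
      rw [← heq]
      exact card_interk_le_alpha (by omega) (by omega)
        (link_subset_ksets h𝒜 hDc) (link_intersecting hint hDE)
    exact le_trans h1 h2
  calc (interk 𝒜 t).card
      ≤ ((Good.biUnion (fun D => (interk 𝒜 t).filter (fun C => D ⊆ C))) ∪ badk 𝒜 t).card :=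
        Finset.card_le_card hcover
    _ ≤ (Good.biUnion (fun D => (interk 𝒜 t).filter (fun C => D ⊆ C))).card + (badk 𝒜 t).card :=
        Finset.card_union_le _ _
    _ ≤ (∑ D ∈ Good, ((interk 𝒜 t).filter (fun C => D ⊆ C)).card) + (badk 𝒜 t).card := by
        exact Nat.add_le_add_right (Finset.card_biUnion_le) _
    _ ≤ (∑ _D ∈ Good, alpha (r - t + 1)) + (badk 𝒜 t).card :=
        Nat.add_le_add_right (Finset.sum_le_sum hper) _
    _ = Good.card * alpha (r - t + 1) + (badk 𝒜 t).card := by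
        rw [Finset.sum_const, smul_eq_mul]
    _ ≤ Nat.choose n (t-1) * alpha (r - t + 1) + (badk 𝒜 t).card := by
        apply Nat.add_le_add_right
        apply Nat.mul_le_mul_right
        calc Good.card ≤ (ksets n (t-1)).card := Finset.card_le_card (Finset.filter_subset _ _)
          _ = Nat.choose n (t-1) := by rw [ksets, Finset.card_powersetCard, card_grd]

lemma badk_card_le {n r t : ℕ} {𝒜 : Finset (Finset ℕ)} (h𝒜 : 𝒜 ⊆ ksets n r)
    (hint : IsIntersecting 𝒜) (ht2 : 2 ≤ t) (htr : t ≤ r) (hrn : r ≤ n) :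
    (badk 𝒜 t).card ≤ (interk 𝒜 (t-1)).card * alpha (r - t + 2) + (badk 𝒜 (t-1)).card * n := by
  classical
  set I := interk 𝒜 (t-1) with hI
  set ext : Finset ℕ → Finset (Finset ℕ) := fun D => (badk 𝒜 t).filter (fun C => D ⊆ C) with hext
  have hcover : badk 𝒜 t ⊆ (I \ badk 𝒜 (t-1)).biUnion ext ∪ (badk 𝒜 (t-1)).biUnion ext := by
    intro C hC
    obtain ⟨hCk, hbad⟩ := mem_badk.1 hC
    have hCcard : C.card = t := (mem_interk.1 hCk).2
    have hCne : C.Nonempty := Finset.card_pos.1 (by omega)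
    obtain ⟨y, hy⟩ := hCne
    have hD : C.erase y ∈ I := by
      obtain ⟨A, hA, B, hB, hAB⟩ := hbad y hy
      exact mem_interk.2 ⟨⟨A, hA, B, hB, hAB⟩, by rw [Finset.card_erase_of_mem hy, hCcard]⟩
    have hCext : C ∈ ext (C.erase y) := Finset.mem_filter.2 ⟨hC, Finset.erase_subset y C⟩
    by_cases hb : C.erase y ∈ badk 𝒜 (t-1)
    · exact Finset.mem_union_right _ (Finset.mem_biUnion.2 ⟨C.erase y, hb, hCext⟩)
    · exact Finset.mem_union_left _ (Finset.mem_biUnion.2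
        ⟨C.erase y, Finset.mem_sdiff.2 ⟨hD, hb⟩, hCext⟩)
  have hbound1 : ∀ D ∈ I \ badk 𝒜 (t-1), (ext D).card ≤ alpha (r - t + 2) := by
    intro D hD
    obtain ⟨hDI, hDb⟩ := Finset.mem_sdiff.1 hD
    have hDcard : D.card = t - 1 := (mem_interk.1 hDI).2
    have : ¬ ∀ y ∈ D, Exact 𝒜 (D.erase y) := fun h => hDb (mem_badk.2 ⟨hDI, h⟩)
    push_neg at this
    obtain ⟨y, hyD, hNE⟩ := this
    set F := D.erase y with hF
    have hFcard : F.card = t - 2 := by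
      rw [hF, Finset.card_erase_of_mem hyD, hDcard]
      omega
    -- inject ext D into interk (link 𝒜 F) 1
    have hinj : (ext D).card ≤ (interk (link 𝒜 F) 1).card := by
      apply Finset.card_le_card_of_injOn (fun C => C \ D)
      · intro C hC
        obtain ⟨hCb, hDC⟩ := Finset.mem_filter.1 hC
        obtain ⟨hCk, hbad⟩ := mem_badk.1 hCb
        have hCcard : C.card = t := (mem_interk.1 hCk).2
        have hyC : y ∈ C := hDC hyD
        obtain ⟨A, hA, B, hB, hAB⟩ := hbad y hyC
        have hFCe : F ⊆ C.erase y := Finset.erase_subset_erase y hDC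
        have hFA : F ⊆ A := hFCe.trans (hAB ▸ Finset.inter_subset_left)
        have hFB : F ⊆ B := hFCe.trans (hAB ▸ Finset.inter_subset_right)
        refine mem_interk.2 ⟨⟨A \ F, mem_link.2 ⟨A, hA, hFA, rfl⟩,
          B \ F, mem_link.2 ⟨B, hB, hFB, rfl⟩, ?_⟩, ?_⟩
        · rw [sdiff_inter_sdiff', hAB, hF, erase_sdiff_erase hyD hDC]
        · rw [Finset.card_sdiff_of_subset hDC, hCcard, hDcard]; omega
      · intro C1 h1 C2 h2 h12
        have hD1 : D ⊆ C1 := (Finset.mem_filter.1 (Finset.mem_coe.1 h1)).2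
        have hD2 : D ⊆ C2 := (Finset.mem_filter.1 (Finset.mem_coe.1 h2)).2
        simp only at h12
        rw [← Finset.sdiff_union_of_subset hD1, ← Finset.sdiff_union_of_subset hD2, h12]
    have heq : r - (t-2) = r - t + 2 := by omega
    have h2 : (interk (link 𝒜 F) 1).card ≤ alpha (r - t + 2) := by
      rw [← heq]
      exact card_interk_le_alpha (by omega) (by omega)
        (link_subset_ksets h𝒜 hFcard) (link_intersecting hint hNE)
    exact le_trans hinj h2
  have hbound2 : ∀ D ∈ badk 𝒜 (t-1), (ext D).card ≤ n := by
    intro D hD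
    have hDcard : D.card = t - 1 := (mem_interk.1 (mem_badk.1 hD).1).2
    have hsub : ext D ⊆ (grd n).image (fun x => insert x D) := by
      intro C hC
      obtain ⟨hCb, hDC⟩ := Finset.mem_filter.1 hC
      have hCk := (mem_badk.1 hCb).1
      have hCcard : C.card = t := (mem_interk.1 hCk).2
      have hCg : C ⊆ grd n := interk_subset_grd h𝒜 hCk
      have hCD1 : (C \ D).card = 1 := by
        rw [Finset.card_sdiff_of_subset hDC, hCcard, hDcard]; omega
      obtain ⟨x, hx⟩ := Finset.card_eq_one.1 hCD1
      have hxC : x ∈ C := by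
        have : x ∈ C \ D := by rw [hx]; exact Finset.mem_singleton_self x
        exact (Finset.mem_sdiff.1 this).1
      refine Finset.mem_image.2 ⟨x, hCg hxC, ?_⟩
      rw [← Finset.sdiff_union_of_subset hDC, hx]
      ext z
      simp [Finset.mem_insert, Finset.mem_union]
    calc (ext D).card ≤ ((grd n).image (fun x => insert x D)).card := Finset.card_le_card hsub
      _ ≤ (grd n).card := Finset.card_image_le
      _ = n := card_grd n
  calc (badk 𝒜 t).card
      ≤ ((I \ badk 𝒜 (t-1)).biUnion ext ∪ (badk 𝒜 (t-1)).biUnion ext).card :=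
        Finset.card_le_card hcover
    _ ≤ ((I \ badk 𝒜 (t-1)).biUnion ext).card + ((badk 𝒜 (t-1)).biUnion ext).card :=
        Finset.card_union_le _ _
    _ ≤ (∑ D ∈ I \ badk 𝒜 (t-1), (ext D).card) + (∑ D ∈ badk 𝒜 (t-1), (ext D).card) :=
        Nat.add_le_add Finset.card_biUnion_le Finset.card_biUnion_le
    _ ≤ (∑ _D ∈ I \ badk 𝒜 (t-1), alpha (r - t + 2)) + (∑ _D ∈ badk 𝒜 (t-1), n) :=
        Nat.add_le_add (Finset.sum_le_sum hbound1) (Finset.sum_le_sum hbound2)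
    _ = (I \ badk 𝒜 (t-1)).card * alpha (r - t + 2) + (badk 𝒜 (t-1)).card * n := by
        rw [Finset.sum_const, Finset.sum_const, smul_eq_mul, smul_eq_mul]
    _ ≤ (interk 𝒜 (t-1)).card * alpha (r - t + 2) + (badk 𝒜 (t-1)).card * n := by
        apply Nat.add_le_add_right
        apply Nat.mul_le_mul_right
        exact Finset.card_le_card (Finset.sdiff_subset.trans (le_of_eq hI.symm))

lemma lemma1 {r : ℕ} (hr : 1 ≤ r) : ∀ t, 1 ≤ t → t ≤ r →
    ∃ c1 c2 : ℕ, ∀ n, r ≤ n → ∀ 𝒜 : Finset (Finset ℕ), 𝒜 ⊆ ksets n r → IsIntersecting 𝒜 →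
      (interk 𝒜 t).card ≤ c1 * n^(t-1) ∧ (badk 𝒜 t).card ≤ c2 * n^(t-2) := by
  intro t ht
  induction t, ht using Nat.le_induction with
  | base =>
    intro htr
    refine ⟨alpha r, 0, ?_⟩
    intro n hn 𝒜 h𝒜 hint
    constructor
    · have h1 := interk_card_le h𝒜 hint (le_refl 1) htr hn
      rw [badk_one hint] at h1
      simp only [Finset.card_empty, add_zero, Nat.choose_zero_right, one_mul] at h1
      have : r - 1 + 1 = r := by omega
      rw [this] at h1
      simpa using h1
    · rw [badk_one hint]
      simp
  | succ t ht IH =>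
    intro htr
    obtain ⟨c1, c2, H⟩ := IH (by omega)
    set α' := alpha (r - (t+1) + 2) with hα'
    set α'' := alpha (r - (t+1) + 1) with hα''
    set c2' := c1 * α' + c2 with hc2'
    refine ⟨α'' + c2', c2', ?_⟩
    intro n hn 𝒜 h𝒜 hint
    have hn1 : 1 ≤ n := le_trans hr hn
    obtain ⟨H1, H2⟩ := H n hn 𝒜 h𝒜 hint
    have hbadstep := badk_card_le h𝒜 hint (by omega : 2 ≤ t+1) htr hn
    have hts : t + 1 - 1 = t := by omega
    rw [hts] at hbadstep
    have hbad : (badk 𝒜 (t+1)).card ≤ c2' * n^(t+1-2) := by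
      have htt : t + 1 - 2 = t - 1 := by omega
      rw [htt]
      rcases Nat.lt_or_ge t 2 with ht1 | ht2
      · -- t = 1
        have ht1' : t = 1 := by omega
        subst ht1'
        rw [badk_one hint] at hbadstep
        simp only [Finset.card_empty, zero_mul, add_zero] at hbadstep
        calc (badk 𝒜 2).card ≤ (interk 𝒜 1).card * α' := hbadstep
          _ ≤ c1 * n^0 * α' := Nat.mul_le_mul_right _ H1
          _ = c1 * α' := by ring_nf
          _ ≤ c2' * n^0 := by
              rw [hc2', pow_zero, mul_one]
              exact Nat.le_add_right _ _
      · -- 2 ≤ t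
        calc (badk 𝒜 (t+1)).card
            ≤ (interk 𝒜 t).card * α' + (badk 𝒜 t).card * n := hbadstep
          _ ≤ c1 * n^(t-1) * α' + c2 * n^(t-2) * n :=
              Nat.add_le_add (Nat.mul_le_mul_right _ H1) (Nat.mul_le_mul_right _ H2)
          _ = c1 * α' * n^(t-1) + c2 * (n^(t-2) * n) := by ring
          _ = c1 * α' * n^(t-1) + c2 * n^(t-1) := by
              have he : t - 2 + 1 = t - 1 := by omega
              rw [← pow_succ, he]
          _ = c2' * n^(t-1) := by rw [hc2']; ring
    refine ⟨?_, hbad⟩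
    have hintstep := interk_card_le h𝒜 hint (by omega : 1 ≤ t+1) htr hn
    rw [hts] at hintstep
    calc (interk 𝒜 (t+1)).card
        ≤ Nat.choose n t * α'' + (badk 𝒜 (t+1)).card := hintstep
      _ ≤ n^t * α'' + c2' * n^(t+1-2) := Nat.add_le_add (Nat.mul_le_mul_right _ (Nat.choose_le_pow n t)) hbad
      _ ≤ n^t * α'' + c2' * n^t := by
          apply Nat.add_le_add_left
          apply Nat.mul_le_mul_left
          apply Nat.pow_le_pow_right hn1
          omega
      _ = (α'' + c2') * n^t := by ring
      _ = (α'' + c2') * n^(t+1-1) := by rw [hts]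

lemma count_supersets {n m j : ℕ} {E : Finset ℕ} (hE : E.card = j) (hj : j ≤ m) :
    (((ksets n m)).filter (fun D => E ⊆ D)).card ≤ Nat.choose n (m - j) := by
  classical
  have h1 : (((ksets n m)).filter (fun D => E ⊆ D)).card ≤ ((grd n).powersetCard (m - j)).card := by
    apply Finset.card_le_card_of_injOn (fun D => D \ E)
    · intro D hD
      obtain ⟨hDks, hED⟩ := Finset.mem_filter.1 hD
      obtain ⟨hDg, hDc⟩ := mem_ksets.1 hDks
      refine Finset.mem_powersetCard.2 ⟨fun x hx => hDg (Finset.mem_sdiff.1 hx).1, ?_⟩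
      rw [Finset.card_sdiff_of_subset hED, hDc, hE]
    · intro D1 h1 D2 h2 h12
      have hE1 : E ⊆ D1 := (Finset.mem_filter.1 (Finset.mem_coe.1 h1)).2
      have hE2 : E ⊆ D2 := (Finset.mem_filter.1 (Finset.mem_coe.1 h2)).2
      simp only at h12
      rw [← Finset.sdiff_union_of_subset hE1, ← Finset.sdiff_union_of_subset hE2, h12]
  rw [Finset.card_powersetCard, card_grd] at h1
  exact h1

lemma link_empty (𝒜 : Finset (Finset ℕ)) : link 𝒜 ∅ = 𝒜 := by
  rw [link]
  have h1 : (𝒜.filter fun A => ∅ ⊆ A) = 𝒜 :=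
    Finset.filter_true_of_mem (fun A _ => Finset.empty_subset A)
  rw [h1]
  have h2 : ∀ A : Finset ℕ, A \ ∅ = A := fun A => Finset.sdiff_empty
  calc 𝒜.image (fun A => A \ ∅) = 𝒜.image id := Finset.image_congr (fun A _ => h2 A)
    _ = 𝒜 := Finset.image_id

/-- Lemma 2: for `n` large, every maximal intersecting `𝒜 ⊆ [n]^(r)` either has few
`k`-intersections, or there is `D ∈ [n]^(k-1)` such that `𝒞 = {A \ D : D ⊆ A ∈ 𝒜}` satisfies
`𝒞 ⊆ [n]^(r-k+1)`, `|𝒞⟨1⟩| = α^(r-k+1)`, and every `r`-set containing a member of `𝒞` is in `𝒜`. -/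
theorem stmt_5 (k r : ℕ) (hk : 1 ≤ k) (hkr : k ≤ r) :
    ∃ c : ℝ, 0 < c ∧ ∃ n₀ : ℕ, ∀ n, n₀ ≤ n →
      ∀ 𝒜 ⊆ ksets n r, IsIntersecting 𝒜 →
      (∀ B ∈ ksets n r, B ∉ 𝒜 → ∃ A ∈ 𝒜, A ∩ B = ∅) →
      (((interk 𝒜 k).card : ℝ) ≤
          ((alpha (r - k + 1) : ℝ) - 1) * (n.choose (k - 1) : ℝ) +
            c * (n : ℝ) ^ ((k : ℤ) - 2)) ∨
      ∃ D ∈ ksets n (k - 1),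
        ((𝒜.filter fun A => D ⊆ A).image fun A => A \ D) ⊆ ksets n (r - k + 1) ∧
        (interPts ((𝒜.filter fun A => D ⊆ A).image fun A => A \ D)).card =
          alpha (r - k + 1) ∧
        ((ksets n r).filter fun B =>
            ∃ C ∈ (𝒜.filter fun A => D ⊆ A).image fun A => A \ D, C ⊆ B) ⊆ 𝒜 := by
  classical
  have hr : 1 ≤ r := le_trans hk hkr
  -- Case k = 1
  rcases Nat.lt_or_ge k 2 with hk2 | hk2
  · have hk1 : k = 1 := by omega
    subst hk1
    refine ⟨1, one_pos, r, ?_⟩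
    intro n hn 𝒜 h𝒜 hint hmax
    have hs : r - 1 + 1 = r := by omega
    by_cases hcase : (interk 𝒜 1).card = alpha r
    · refine Or.inr ⟨∅, mem_ksets.2 ⟨Finset.empty_subset _, by simp⟩, ?_, ?_, ?_⟩
      · show link 𝒜 ∅ ⊆ ksets n (r - 1 + 1)
        rw [link_empty, hs]
        exact h𝒜
      · show (interPts (link 𝒜 ∅)).card = alpha (r - 1 + 1)
        rw [link_empty, hs, interPts_card]
        exact hcase
      · intro B hB
        obtain ⟨hBks, C, hC, hCB⟩ := Finset.mem_filter.1 hB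
        have hC𝒜 : C ∈ 𝒜 := by
          have : C ∈ link 𝒜 ∅ := hC
          rwa [link_empty] at this
        have hcards : B.card ≤ C.card := by
          rw [(mem_ksets.1 hBks).2, (mem_ksets.1 (h𝒜 hC𝒜)).2]
        rw [← Finset.eq_of_subset_of_card_le hCB hcards]
        exact hC𝒜
    · left
      have hle : (interk 𝒜 1).card ≤ alpha r := card_interk_le_alpha hr hn h𝒜 hint
      have hlt : (interk 𝒜 1).card < alpha r := lt_of_le_of_ne hle hcase
      have hcast : ((interk 𝒜 1).card : ℝ) + 1 ≤ (alpha r : ℝ) := by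
        have := Nat.succ_le_of_lt hlt
        exact_mod_cast this
      have hzpow : (0:ℝ) ≤ (n : ℝ) ^ (((1:ℕ) : ℤ) - 2) := by
        apply zpow_nonneg
        exact Nat.cast_nonneg n
      have hch : (n.choose (1-1) : ℝ) = 1 := by norm_num
      rw [hs, hch]
      nlinarith [hzpow]
  -- Case 2 ≤ k
  · set s := r - k + 1 with hsdef
    have hs1 : 1 ≤ s := by omega
    have hαpos : 1 ≤ alpha s := alpha_pos hs1
    -- constants
    have hconsts : ∀ j, ∃ c1 c2 : ℕ, 1 ≤ j → j ≤ r →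
        ∀ n, r ≤ n → ∀ 𝒜 : Finset (Finset ℕ), 𝒜 ⊆ ksets n r → IsIntersecting 𝒜 →
        (interk 𝒜 j).card ≤ c1 * n^(j-1) ∧ (badk 𝒜 j).card ≤ c2 * n^(j-2) := by
      intro j
      by_cases hj : 1 ≤ j ∧ j ≤ r
      · obtain ⟨c1, c2, H⟩ := lemma1 hr j hj.1 hj.2
        exact ⟨c1, c2, fun _ _ => H⟩
      · exact ⟨0, 0, fun h1 h2 => absurd ⟨h1, h2⟩ hj⟩
    choose c1f c2f hcf using hconsts
    set C1 := (Finset.range (k+1)).sup c1f with hC1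
    set cN : ℕ := c2f k + alpha s * ((k-1) * C1) + 1 with hcN
    refine ⟨(cN : ℝ), by positivity, r, ?_⟩
    intro n hn 𝒜 h𝒜 hint hmax
    have hn1 : 1 ≤ n := le_trans hr hn
    by_cases hii : ∃ D ∈ ksets n (k - 1),
        ((𝒜.filter fun A => D ⊆ A).image fun A => A \ D) ⊆ ksets n (r - k + 1) ∧
        (interPts ((𝒜.filter fun A => D ⊆ A).image fun A => A \ D)).card =
          alpha (r - k + 1) ∧
        ((ksets n r).filter fun B =>
            ∃ C ∈ (𝒜.filter fun A => D ⊆ A).image fun A => A \ D, C ⊆ B) ⊆ 𝒜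
    · exact Or.inr hii
    left
    -- setup
    set val : Finset ℕ → ℕ := fun D => (interk (link 𝒜 D) 1).card with hvaldef
    set Good := (ksets n (k-1)).filter (fun D => ¬ Exact 𝒜 D) with hGood
    set G1 := Good.filter (fun D => val D ≤ alpha s - 1) with hG1
    set G2 := Good.filter (fun D => ¬ (val D ≤ alpha s - 1)) with hG2
    set ext : Finset ℕ → Finset (Finset ℕ) := fun D => (interk 𝒜 k).filter (fun C => D ⊆ C)
      with hext
    have hkm1r : k - 1 ≤ r := by omega
    have hGoodcard : ∀ D ∈ Good, D.card = k - 1 := by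
      intro D hD
      exact (mem_ksets.1 (Finset.mem_filter.1 hD).1).2
    have hval_le : ∀ D ∈ Good, val D ≤ alpha s := by
      intro D hD
      have hDc := hGoodcard D hD
      have hNE := (Finset.mem_filter.1 hD).2
      have heq : r - (k-1) = s := by omega
      rw [hvaldef]
      simp only
      rw [← heq]
      exact card_interk_le_alpha (by omega) (by omega)
        (link_subset_ksets h𝒜 hDc) (link_intersecting hint hNE)
    -- the k-intersections are covered
    have hcover : interk 𝒜 k ⊆ (G1.biUnion ext ∪ G2.biUnion ext) ∪ badk 𝒜 k := by
      intro C hC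
      by_cases hb : C ∈ badk 𝒜 k
      · exact Finset.mem_union_right _ hb
      have : ¬ ∀ y ∈ C, Exact 𝒜 (C.erase y) := fun h => hb (mem_badk.2 ⟨hC, h⟩)
      push_neg at this
      obtain ⟨y, hy, hNE⟩ := this
      have hCc : C.card = k := (mem_interk.1 hC).2
      have hCg : C ⊆ grd n := interk_subset_grd h𝒜 hC
      have hD : C.erase y ∈ Good := by
        rw [hGood, Finset.mem_filter]
        exact ⟨mem_ksets.2 ⟨(Finset.erase_subset y C).trans hCg,
          by rw [Finset.card_erase_of_mem hy, hCc]⟩, hNE⟩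
      have hCext : C ∈ ext (C.erase y) := Finset.mem_filter.2 ⟨hC, Finset.erase_subset y C⟩
      apply Finset.mem_union_left
      by_cases hv : val (C.erase y) ≤ alpha s - 1
      · exact Finset.mem_union_left _ (Finset.mem_biUnion.2
          ⟨C.erase y, Finset.mem_filter.2 ⟨hD, hv⟩, hCext⟩)
      · exact Finset.mem_union_right _ (Finset.mem_biUnion.2
          ⟨C.erase y, Finset.mem_filter.2 ⟨hD, hv⟩, hCext⟩)
    -- extension counts
    have hextval : ∀ D ∈ Good, (ext D).card ≤ val D := by
      intro D hD
      exact ext_inj_general (hGoodcard D hD) hk _ (le_refl _)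
    -- deficient D's contain a small exact intersection
    have hG2sub : G2 ⊆ (Finset.Icc 1 (k-1)).biUnion (fun j => (interk 𝒜 j).biUnion
        (fun E => (ksets n (k-1)).filter (fun D => E ⊆ D))) := by
      intro D hD
      obtain ⟨hDGood, hDnot⟩ := Finset.mem_filter.1 hD
      have hDks : D ∈ ksets n (k-1) := (Finset.mem_filter.1 hDGood).1
      have hDc := hGoodcard D hDGood
      have hvalD : val D = alpha s := by
        have h1 := hval_le D hDGood
        omega
      have hP1 : ((𝒜.filter fun A => D ⊆ A).image fun A => A \ D) ⊆ ksets n (r - k + 1) := by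
        have heq : r - (k-1) = r - k + 1 := by omega
        rw [← heq]
        exact link_subset_ksets h𝒜 hDc
      have hP2 : (interPts ((𝒜.filter fun A => D ⊆ A).image fun A => A \ D)).card =
          alpha (r - k + 1) := by
        show (interPts (link 𝒜 D)).card = alpha (r - k + 1)
        rw [interPts_card]
        exact hvalD
      have hP3 : ¬ (((ksets n r).filter fun B =>
          ∃ C ∈ (𝒜.filter fun A => D ⊆ A).image fun A => A \ D, C ⊆ B) ⊆ 𝒜) :=
        fun h => hii ⟨D, hDks, hP1, hP2, h⟩
      rw [Finset.not_subset] at hP3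
      obtain ⟨B, hBf, hB𝒜⟩ := hP3
      obtain ⟨hBks, C₀, hC₀link, hC₀B⟩ := Finset.mem_filter.1 hBf
      obtain ⟨A', hA', hA'B⟩ := hmax B hBks hB𝒜
      obtain ⟨A₁, hA₁, hDA₁, hC₀eq⟩ := mem_link.1 hC₀link
      set E := A' ∩ A₁ with hE
      have hEne : E.Nonempty := hint A' hA' A₁ hA₁
      have hED : E ⊆ D := by
        intro x hx
        obtain ⟨hxA', hxA₁⟩ := Finset.mem_inter.1 hx
        by_contra hxD
        have hxC₀ : x ∈ C₀ := by
          rw [← hC₀eq]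
          exact Finset.mem_sdiff.2 ⟨hxA₁, hxD⟩
        have : x ∈ A' ∩ B := Finset.mem_inter.2 ⟨hxA', hC₀B hxC₀⟩
        rw [hA'B] at this
        exact Finset.notMem_empty x this
      have hj1 : 1 ≤ E.card := Finset.card_pos.2 hEne
      have hj2 : E.card ≤ k - 1 := hDc ▸ Finset.card_le_card hED
      refine Finset.mem_biUnion.2 ⟨E.card, Finset.mem_Icc.2 ⟨hj1, hj2⟩,
        Finset.mem_biUnion.2 ⟨E, mem_interk.2 ⟨⟨A', hA', A₁, hA₁, hE.symm⟩, rfl⟩,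
          Finset.mem_filter.2 ⟨hDks, hED⟩⟩⟩
    -- count G2
    have hG2card : G2.card ≤ (k-1) * C1 * n^(k-2) := by
      calc G2.card ≤ ((Finset.Icc 1 (k-1)).biUnion (fun j => (interk 𝒜 j).biUnion
            (fun E => (ksets n (k-1)).filter (fun D => E ⊆ D)))).card :=
            Finset.card_le_card hG2sub
        _ ≤ ∑ j ∈ Finset.Icc 1 (k-1), ((interk 𝒜 j).biUnion
            (fun E => (ksets n (k-1)).filter (fun D => E ⊆ D))).card := Finset.card_biUnion_le
        _ ≤ ∑ j ∈ Finset.Icc 1 (k-1), C1 * n^(k-2) := by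
            apply Finset.sum_le_sum
            intro j hj
            obtain ⟨hj1, hj2⟩ := Finset.mem_Icc.1 hj
            have hjr : j ≤ r := by omega
            calc ((interk 𝒜 j).biUnion (fun E => (ksets n (k-1)).filter (fun D => E ⊆ D))).card
                ≤ ∑ E ∈ interk 𝒜 j, ((ksets n (k-1)).filter (fun D => E ⊆ D)).card :=
                  Finset.card_biUnion_le
              _ ≤ ∑ _E ∈ interk 𝒜 j, n^(k-1-j) := by
                  apply Finset.sum_le_sum
                  intro E hE
                  have hEcard : E.card = j := (mem_interk.1 hE).2
                  calc ((ksets n (k-1)).filter (fun D => E ⊆ D)).card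
                      ≤ Nat.choose n (k-1-j) := count_supersets hEcard (by omega)
                    _ ≤ n^(k-1-j) := Nat.choose_le_pow n (k-1-j)
              _ = (interk 𝒜 j).card * n^(k-1-j) := by rw [Finset.sum_const, smul_eq_mul]
              _ ≤ (c1f j * n^(j-1)) * n^(k-1-j) := Nat.mul_le_mul_right _
                  ((hcf j hj1 hjr n hn 𝒜 h𝒜 hint).1)
              _ = c1f j * (n^(j-1) * n^(k-1-j)) := by ring
              _ = c1f j * n^(k-2) := by
                  rw [← pow_add]
                  have hje : j - 1 + (k-1-j) = k-2 := by omega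
                  rw [hje]
              _ ≤ C1 * n^(k-2) := Nat.mul_le_mul_right _
                  (Finset.le_sup (Finset.mem_range.2 (by omega)))
        _ = (k-1) * (C1 * n^(k-2)) := by
            rw [Finset.sum_const, smul_eq_mul, Nat.card_Icc, Nat.add_sub_cancel]
        _ = (k-1) * C1 * n^(k-2) := by ring
    -- the natural number bound
    have hmain : (interk 𝒜 k).card ≤
        (alpha s - 1) * Nat.choose n (k-1) + (c2f k + alpha s * ((k-1) * C1)) * n^(k-2) := by
      have hbadk : (badk 𝒜 k).card ≤ c2f k * n^(k-2) := (hcf k hk hkr n hn 𝒜 h𝒜 hint).2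
      calc (interk 𝒜 k).card
          ≤ ((G1.biUnion ext ∪ G2.biUnion ext) ∪ badk 𝒜 k).card := Finset.card_le_card hcover
        _ ≤ (G1.biUnion ext ∪ G2.biUnion ext).card + (badk 𝒜 k).card := Finset.card_union_le _ _
        _ ≤ ((G1.biUnion ext).card + (G2.biUnion ext).card) + (badk 𝒜 k).card :=
            Nat.add_le_add_right (Finset.card_union_le _ _) _
        _ ≤ ((∑ D ∈ G1, (ext D).card) + (∑ D ∈ G2, (ext D).card)) + (badk 𝒜 k).card :=
            Nat.add_le_add_right (Nat.add_le_add Finset.card_biUnion_le Finset.card_biUnion_le) _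
        _ ≤ ((∑ _D ∈ G1, (alpha s - 1)) + (∑ _D ∈ G2, alpha s)) + (badk 𝒜 k).card := by
            apply Nat.add_le_add_right
            apply Nat.add_le_add
            · apply Finset.sum_le_sum
              intro D hD
              have hDGood : D ∈ Good := (Finset.mem_filter.1 hD).1
              exact le_trans (hextval D hDGood) (Finset.mem_filter.1 hD).2
            · apply Finset.sum_le_sum
              intro D hD
              have hDGood : D ∈ Good := (Finset.mem_filter.1 hD).1
              exact le_trans (hextval D hDGood) (hval_le D hDGood)
        _ = (G1.card * (alpha s - 1) + G2.card * alpha s) + (badk 𝒜 k).card := by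
            rw [Finset.sum_const, Finset.sum_const, smul_eq_mul, smul_eq_mul]
        _ ≤ (Nat.choose n (k-1) * (alpha s - 1) + ((k-1) * C1 * n^(k-2)) * alpha s)
            + c2f k * n^(k-2) := by
            apply Nat.add_le_add
            · apply Nat.add_le_add
              · apply Nat.mul_le_mul_right
                calc G1.card ≤ Good.card := Finset.card_le_card (Finset.filter_subset _ _)
                  _ ≤ (ksets n (k-1)).card := Finset.card_le_card (Finset.filter_subset _ _)
                  _ = Nat.choose n (k-1) := by rw [ksets, Finset.card_powersetCard, card_grd]
              · exact Nat.mul_le_mul_right _ hG2card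
            · exact hbadk
        _ = (alpha s - 1) * Nat.choose n (k-1) + (c2f k + alpha s * ((k-1) * C1)) * n^(k-2) := by
            ring
    -- cast to ℝ
    have hzpow : (n : ℝ) ^ ((k : ℤ) - 2) = ((n^(k-2) : ℕ) : ℝ) := by
      have h1 : ((k : ℤ) - 2) = ((k - 2 : ℕ) : ℤ) := by omega
      rw [h1, zpow_natCast]
      push_cast
      rfl
    rw [hzpow]
    have hcast1 : (((alpha s - 1) * Nat.choose n (k-1) : ℕ) : ℝ) =
        ((alpha (r-k+1) : ℝ) - 1) * (n.choose (k-1) : ℝ) := by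
      rw [hsdef]
      push_cast [Nat.cast_sub (show 1 ≤ alpha (r-k+1) from hαpos)]
      ring_nf
    have h2 : ((interk 𝒜 k).card : ℝ) ≤
        (((alpha s - 1) * Nat.choose n (k-1) : ℕ) : ℝ) +
        (((c2f k + alpha s * ((k-1) * C1)) * n^(k-2) : ℕ) : ℝ) := by
      have := hmain
      exact_mod_cast this
    rw [hcast1] at h2
    have h3 : (((c2f k + alpha s * ((k-1) * C1)) * n^(k-2) : ℕ) : ℝ) ≤
        (cN : ℝ) * ((n^(k-2) : ℕ) : ℝ) := by
      rw [hcN]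
      push_cast
      have hpos : (0:ℝ) ≤ ((n^(k-2) : ℕ) : ℝ) := Nat.cast_nonneg _
      push_cast at hpos
      nlinarith
    linarith
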